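/- A square irreducible substochastic matrix B is convergent (i.e. B^k → 0 as k → ∞) if and only if Ĵ(B) is nonempty. -/

import Mathlib

open Matrix Filter Finset

/-- A substochastic matrix: nonnegative entries, row sums at most one. -/
def IsSubstochastic {m n : Type*} [Fintype n] (B : Matrix m n ℝ) : Prop :=
  (∀ i j, 0 ≤ B i j) ∧ ∀ i, ∑ j, B i j ≤ 1

/-- Ĵ(B): the set of rows with row-sum strictly less than one. -/
def Jhat {m n : Type*} [Fintype n] (B : Matrix m n ℝ) : Set m :=
  {i | ∑ j, B i j < 1}

/-- There is a walk of length `ℓ` (a nonempty sequence of `ℓ` consecutive edges) in the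
digraph of `A` (edge `i → j` iff `A i j ≠ 0`) starting at `i` and ending in `S`. -/
def IsWalkTo {V : Type*} (A : Matrix V V ℝ) (i : V) (S : Set V) (ℓ : ℕ) : Prop :=
  1 ≤ ℓ ∧ ∃ w : ℕ → V, w 0 = i ∧ (∀ k < ℓ, A (w k) (w (k + 1)) ≠ 0) ∧ w ℓ ∈ S

/-- The index of contraction `ĉon B ∈ ℕ∞`:
`max(0, sup_{i ∉ Ĵ(B)} inf_{p ∈ P̂ᵢ(B)} |p|)` with `inf ∅ = ∞`, `sup ∅ = -∞`
(in `ℕ∞` the empty supremum is `0`, matching `max(0, -∞) = 0`). -/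
noncomputable def conHat {V : Type*} [Fintype V] (B : Matrix V V ℝ) : ℕ∞ :=
  ⨆ i ∈ (Jhat B)ᶜ, ⨅ ℓ ∈ {ℓ : ℕ | IsWalkTo B i (Jhat B) ℓ}, (ℓ : ℕ∞)

/-- The maximum absolute row-sum norm `‖·‖_∞`. -/
noncomputable def rowSumNorm {m n : Type*} [Fintype n] (B : Matrix m n ℝ) : ℝ :=
  ⨆ i, ∑ j, |B i j|

/-- `B` is convergent: `Bᵏ → 0` as `k → ∞`. -/
def IsConvergent {V : Type*} [Fintype V] [DecidableEq V] (B : Matrix V V ℝ) : Prop :=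
  Tendsto (fun k : ℕ => B ^ k) atTop (nhds 0)

/-- `B` is irreducible: its digraph is strongly connected, i.e. for every pair of
vertices `i, j` there is a walk from `i` to `j`. -/
def IsIrreducibleMat {V : Type*} (B : Matrix V V ℝ) : Prop :=
  ∀ i j : V, ∃ ℓ : ℕ, 1 ≤ ℓ ∧
    ∃ w : ℕ → V, w 0 = i ∧ w ℓ = j ∧ ∀ k < ℓ, B (w k) (w (k + 1)) ≠ 0

theorem stmt4 {n : ℕ} (hn : 0 < n) (B : Matrix (Fin n) (Fin n) ℝ)
    (hB : IsSubstochastic B) (hirr : IsIrreducibleMat B) :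
    IsConvergent B ↔ (Jhat B).Nonempty := by
  classical
  haveI : Nonempty (Fin n) := Fin.pos_iff_nonempty.mp hn
  obtain ⟨hpos, hrow⟩ := hB
  set r : ℕ → Fin n → ℝ := fun k i => ∑ j, (B ^ k) i j with hrdef
  have hnn : ∀ k (i j : Fin n), 0 ≤ (B ^ k) i j := by
    intro k
    induction k with
    | zero => intro i j; by_cases h : i = j <;> simp [pow_zero, Matrix.one_apply, h]
    | succ k ih =>
      intro i j
      rw [pow_succ, Matrix.mul_apply]
      exact Finset.sum_nonneg fun l _ => mul_nonneg (ih i l) (hpos l j)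
  have hr0 : ∀ i, r 0 i = 1 := by
    intro i; simp [hrdef, pow_zero, Matrix.one_apply]
  have hadd : ∀ a b (i : Fin n), r (a + b) i = ∑ l, (B ^ a) i l * r b l := by
    intro a b i
    simp only [hrdef, pow_add, Matrix.mul_apply]
    rw [Finset.sum_comm]
    simp [Finset.mul_sum]
  have hrle1 : ∀ k (i : Fin n), r k i ≤ 1 := by
    intro k
    induction k with
    | zero => intro i; rw [hr0]
    | succ k ih =>
      intro i
      have : r (1 + k) i = ∑ l, (B ^ 1) i l * r k l := hadd 1 k i
      rw [show k + 1 = 1 + k by omega, this]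
      calc ∑ l, (B ^ 1) i l * r k l ≤ ∑ l, (B ^ 1) i l :=
            Finset.sum_le_sum fun l _ => mul_le_of_le_one_right (hnn 1 i l) (ih l)
        _ ≤ 1 := by simpa [pow_one] using hrow i
  have hrnn : ∀ k (i : Fin n), 0 ≤ r k i :=
    fun k i => Finset.sum_nonneg fun j _ => hnn k i j
  have hanti : ∀ i : Fin n, Antitone fun k => r k i := by
    intro i
    apply antitone_nat_of_succ_le
    intro k
    rw [hadd k 1 i]
    calc ∑ l, (B ^ k) i l * r 1 l ≤ ∑ l, (B ^ k) i l :=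
          Finset.sum_le_sum fun l _ => mul_le_of_le_one_right (hnn k i l) (hrle1 1 l)
      _ = r k i := rfl
  have hrow1 : ∀ i : Fin n, r 1 i = ∑ j, B i j := by
    intro i; simp [hrdef, pow_one]
  constructor
  · -- convergent → Jhat nonempty
    intro hconv
    by_contra hne
    rw [Set.not_nonempty_iff_eq_empty] at hne
    have hstoch : ∀ i : Fin n, ∑ j, B i j = 1 := by
      intro i
      refine le_antisymm (hrow i) (not_lt.mp ?_)
      intro h
      exact absurd (Set.eq_empty_iff_forall_notMem.mp hne i) (by exact fun hh => hh h)
    have hrone : ∀ k (i : Fin n), r k i = 1 := by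
      intro k
      induction k with
      | zero => exact hr0
      | succ k ih =>
        intro i
        rw [show k + 1 = 1 + k by omega, hadd 1 k i]
        simp only [ih, mul_one, pow_one]
        exact hstoch i
    set i0 : Fin n := ⟨0, hn⟩
    have hentry : ∀ j : Fin n, Tendsto (fun k => (B ^ k) i0 j) atTop (nhds 0) := by
      intro j
      have hc : Continuous fun M : Matrix (Fin n) (Fin n) ℝ => M i0 j :=
        (continuous_apply j).comp (continuous_apply i0)
      have := (hc.tendsto 0).comp hconv
      exact this
    have hsum : Tendsto (fun k => r k i0) atTop (nhds 0) := by
      have := tendsto_finset_sum Finset.univ fun j (_ : j ∈ Finset.univ) => hentry j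
      simpa [hrdef] using this
    have : Tendsto (fun _ : ℕ => (1 : ℝ)) atTop (nhds 0) := by
      simpa [hrone] using hsum
    have h10 : (1 : ℝ) = 0 := tendsto_nhds_unique tendsto_const_nhds this
    norm_num at h10
  · -- Jhat nonempty → convergent
    rintro ⟨i0, hi0⟩
    -- key: walk of length ℓ ending in Jhat ⇒ r (ℓ+1) (start) < 1
    have hkey : ∀ ℓ (w : ℕ → Fin n), (∀ k < ℓ, B (w k) (w (k + 1)) ≠ 0) →
        w ℓ ∈ Jhat B → r (ℓ + 1) (w 0) < 1 := by
      intro ℓ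
      induction ℓ with
      | zero =>
        intro w _ hmem
        rw [hrow1]
        exact hmem
      | succ ℓ ih =>
        intro w hw hmem
        have h1 : r (ℓ + 1) (w 1) < 1 :=
          ih (fun k => w (k + 1)) (fun k hk => hw (k + 1) (by omega)) hmem
        have hB0 : 0 < B (w 0) (w 1) :=
          lt_of_le_of_ne (hpos _ _) (Ne.symm (hw 0 (by omega)))
        rw [show ℓ + 1 + 1 = 1 + (ℓ + 1) by omega, hadd 1 (ℓ + 1) (w 0)]
        simp only [pow_one]
        have hlt : ∑ l, B (w 0) l * r (ℓ + 1) l < ∑ l, B (w 0) l := by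
          refine Finset.sum_lt_sum
            (fun l _ => mul_le_of_le_one_right (hpos _ _) (hrle1 _ _)) ?_
          refine ⟨w 1, Finset.mem_univ _, ?_⟩
          nlinarith [hrle1 (ℓ + 1) (w 1)]
        exact hlt.trans_le (hrow _)
    -- for each i there is some L with r L i < 1
    have hL : ∀ i : Fin n, ∃ L : ℕ, r L i < 1 := by
      intro i
      obtain ⟨ℓ, hℓ1, w, hw0, hwℓ, hw⟩ := hirr i i0
      refine ⟨ℓ + 1, ?_⟩
      have := hkey ℓ w hw (by rw [hwℓ]; exact hi0)
      rwa [hw0] at this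
    choose L hLlt using hL
    set m : ℕ := (Finset.univ.sup L) with hm
    have hmge : ∀ i : Fin n, L i ≤ m := fun i => Finset.le_sup (Finset.mem_univ i)
    have hrm : ∀ i : Fin n, r m i < 1 := fun i => lt_of_le_of_lt (hanti i (hmge i)) (hLlt i)
    set c : ℝ := Finset.univ.sup' Finset.univ_nonempty (fun i => r m i) with hc
    have hc1 : c < 1 := (Finset.sup'_lt_iff _).mpr fun i _ => hrm i
    have hc0 : 0 ≤ c :=
      le_trans (hrnn m (Classical.arbitrary (Fin n)))
        (Finset.le_sup' _ (Finset.mem_univ _))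
    have hrc : ∀ i : Fin n, r m i ≤ c := fun i => Finset.le_sup' _ (Finset.mem_univ i)
    have hmpos : 0 < m := by
      have := hmge (Classical.arbitrary (Fin n))
      have hL1 : 1 ≤ L (Classical.arbitrary (Fin n)) := by
        by_contra h
        push_neg at h
        interval_cases hLL : L (Classical.arbitrary (Fin n))
        · have := hLlt (Classical.arbitrary (Fin n))
          rw [hLL, hr0] at this
          norm_num at this
      omega
    have hpow : ∀ k (i : Fin n), r (m * k) i ≤ c ^ k := by
      intro k
      induction k with
      | zero => intro i; simpa [hr0] using le_refl (1 : ℝ)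
      | succ k ih =>
        intro i
        rw [show m * (k + 1) = m + m * k by ring, hadd m (m * k) i]
        calc ∑ l, (B ^ m) i l * r (m * k) l ≤ ∑ l, (B ^ m) i l * c ^ k :=
              Finset.sum_le_sum fun l _ =>
                mul_le_mul_of_nonneg_left (ih l) (hnn m i l)
          _ = r m i * c ^ k := by rw [← Finset.sum_mul]
          _ ≤ c * c ^ k :=
              mul_le_mul_of_nonneg_right (hrc i) (pow_nonneg hc0 k)
          _ = c ^ (k + 1) := by ring
    have hdiv : Tendsto (fun N : ℕ => N / m) atTop atTop := by
      refine tendsto_atTop_atTop.mpr fun b => ⟨b * m, fun a ha => ?_⟩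
      exact (Nat.le_div_iff_mul_le hmpos).mpr ha
    have hgeo : Tendsto (fun N : ℕ => c ^ (N / m)) atTop (nhds 0) :=
      (tendsto_pow_atTop_nhds_zero_of_lt_one hc0 hc1).comp hdiv
    rw [IsConvergent]
    refine tendsto_pi_nhds.mpr ?_
    intro i
    rw [tendsto_pi_nhds]
    intro j
    have hzero : ((0 : Matrix (Fin n) (Fin n) ℝ)) i j = 0 := rfl
    rw [hzero]
    refine squeeze_zero (fun N => hnn N i j) (fun N => ?_) hgeo
    calc (B ^ N) i j ≤ r N i := Finset.single_le_sum (fun l _ => hnn N i l) (Finset.mem_univ j)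
      _ ≤ r (m * (N / m)) i := hanti i (by rw [mul_comm]; exact Nat.div_mul_le_self N m)
      _ ≤ c ^ (N / m) := hpow (N / m) i
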